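/- (Conical sections lemma) Let K be a convex body in ℝⁿ, H an i-dimensional subspace of ℝⁿ, and define f : P_H K → [0,∞) by f(y) := vol_{n−i}(K ∩ (y + H^⊥))^{1/(n−i)}, which is concave by Brunn–Minkowski. Suppose there is y₀ ∈ P_H K such that the hypograph of f equals conv(P_H K × {0}, (y₀, ‖f‖_∞)). Then for every y ∈ P_H K there is z(y) ∈ ℝⁿ such that K ∩ (y + H^⊥) = z(y) + (1 − ‖y − y₀‖_{P_H K}) · (K ∩ (y₀ + H^⊥)), where ‖x‖_C := min{λ ≥ 0 : x ∈ λC} is the Minkowski functional (here applied to y − y₀ with respect to the translated body P_H K − y₀; the statement uses ‖y − y₀‖_{P_H K} as in the paper). -/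

import Mathlib

open MeasureTheory Metric Set Filter
open scoped Pointwise Topology

section Aux

lemma aux_eq_of_subset_of_measure_le {E : Type*} [NormedAddCommGroup E] [NormedSpace ℝ E]
    [MeasurableSpace E] [BorelSpace E] [FiniteDimensional ℝ E]
    (μ : Measure E) [μ.IsAddHaarMeasure] {A B : Set E}
    (hAB : A ⊆ B) (hA : IsClosed A) (hAc : Convex ℝ A) (hB : Convex ℝ B)
    (hpos : μ A ≠ 0) (hfin : μ B ≠ ⊤) (hle : μ B ≤ μ A) : B = A := by
  have hAfin : μ A ≠ ⊤ := fun h => hfin (top_le_iff.mp (h ▸ measure_mono hAB))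
  -- interior of A is nonempty
  have hint : (interior A).Nonempty := by
    by_contra hemp
    rw [Set.not_nonempty_iff_eq_empty] at hemp
    have hspan : affineSpan ℝ A ≠ ⊤ := by
      intro h
      rw [← hAc.interior_nonempty_iff_affineSpan_eq_top] at h
      rw [hemp] at h; exact h.ne_empty rfl
    exact hpos (measure_mono_null (subset_affineSpan ℝ A) (μ.addHaar_affineSubspace _ hspan))
  obtain ⟨x0, hx0⟩ := hint
  obtain ⟨r, hr, hball⟩ := Metric.isOpen_iff.mp isOpen_interior x0 hx0
  have hballA : ball x0 r ⊆ A := hball.trans interior_subset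
  refine Set.Subset.antisymm ?_ hAB
  intro a ha
  by_contra haA
  have hAne : A.Nonempty := ⟨x0, hballA (mem_ball_self hr)⟩
  have hδ : 0 < infDist a A := (hA.notMem_iff_infDist_pos hAne).mp haA
  set δ := infDist a A with hδdef
  set R : ℝ := dist a x0 + r with hR
  have hRpos : 0 < R := by positivity
  set ε : ℝ := δ / (R + δ) with hε
  have hεpos : 0 < ε := by positivity
  have hεlt : ε < 1 := by
    rw [hε, div_lt_one (by positivity)]; linarith
  have hεR : ε * R < δ := by
    rw [hε, div_mul_eq_mul_div, div_lt_iff₀ (by positivity)]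
    nlinarith
  set a' : E := a + ε • (x0 - a) with ha'
  -- the small ball is inside B
  have hsub : ball a' (ε * r) ⊆ B := by
    intro u hu
    have hbmem : x0 + ε⁻¹ • (u - a') ∈ ball x0 r := by
      rw [mem_ball, dist_eq_norm]
      have : x0 + ε⁻¹ • (u - a') - x0 = ε⁻¹ • (u - a') := by abel
      rw [this, norm_smul, norm_inv, Real.norm_eq_abs, abs_of_pos hεpos]
      rw [mem_ball, dist_eq_norm] at hu
      rw [inv_mul_lt_iff₀ hεpos]
      linarith [hu]
    have hcomb := hB (hAB (hballA hbmem)) ha (le_of_lt hεpos)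
      (by linarith : (0:ℝ) ≤ 1 - ε) (by ring : ε + (1 - ε) = 1)
    have : ε • (x0 + ε⁻¹ • (u - a')) + (1 - ε) • a = u := by
      rw [smul_add, smul_smul, mul_inv_cancel₀ (ne_of_gt hεpos), one_smul]
      rw [ha']; simp only [smul_sub, sub_smul, one_smul]; abel
    rwa [this] at hcomb
  -- the small ball is disjoint from A
  have hdisj : Disjoint A (ball a' (ε * r)) := by
    rw [Set.disjoint_right]
    intro u hu huA
    have h1 : dist u a < ε * r + ε * dist x0 a := by
      calc dist u a ≤ dist u a' + dist a' a := dist_triangle _ _ _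
        _ < ε * r + ε * dist x0 a := by
            apply add_lt_add_of_lt_of_le (mem_ball.mp hu)
            rw [ha', dist_eq_norm]
            have : a + ε • (x0 - a) - a = ε • (x0 - a) := by abel
            rw [this, norm_smul, Real.norm_eq_abs, abs_of_pos hεpos, dist_eq_norm,
              norm_sub_rev]
    have h2 : δ ≤ dist a u := infDist_le_dist_of_mem huA
    rw [dist_comm x0 a] at h1
    have : ε * r + ε * dist a x0 = ε * R := by rw [hR]; ring
    rw [this] at h1
    rw [dist_comm] at h2
    linarith
  have hμball : 0 < μ (ball a' (ε * r)) := measure_ball_pos μ _ (by positivity)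
  have hunion : μ A + μ (ball a' (ε * r)) ≤ μ B := by
    rw [← measure_union hdisj measurableSet_ball]
    exact measure_mono (Set.union_subset hAB hsub)
  have : μ A + μ (ball a' (ε * r)) ≤ μ A + 0 := by
    rw [add_zero]; exact hunion.trans hle
  have := (ENNReal.add_le_add_iff_left hAfin).mp this
  simp only [nonpos_iff_eq_zero] at this
  exact hμball.ne' this

lemma aux_gauge_attained {E : Type*} [NormedAddCommGroup E] [NormedSpace ℝ E] {C : Set E}
    (hCc : IsCompact C) (h0 : (0:E) ∈ C) (hconv : Convex ℝ C) {x : E} (hx : x ∈ C)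
    (hx0 : x ≠ 0) : 0 < gauge C x ∧ x ∈ gauge C x • C := by
  obtain ⟨R, hR⟩ := hCc.isBounded.subset_closedBall 0
  have hRpos : 0 < R := by
    have := hR h0; simp [mem_closedBall, dist_eq_norm] at this
    rcases lt_or_eq_of_le this with h | h
    · exact h
    · -- R = 0 would force C ⊆ {0}; but then x = 0
      by_contra hR0
      push_neg at hR0
      have hxx := hR hx
      rw [mem_closedBall, dist_zero_right] at hxx
      have : ‖x‖ = 0 := le_antisymm (hxx.trans hR0) (norm_nonneg x)
      exact hx0 (norm_eq_zero.mp this)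
  set T := {r ∈ Set.Ioi (0:ℝ) | x ∈ r • C} with hT
  have hTne : T.Nonempty := ⟨1, by simp [hT], by simpa using hx⟩
  have hTlb : ∀ r ∈ T, ‖x‖ / R ≤ r := by
    rintro r ⟨hr, c, hc, hrc⟩
    change r • c = x at hrc
    have := hR hc
    rw [mem_closedBall, dist_zero_right] at this
    rw [div_le_iff₀ hRpos]
    calc ‖x‖ = ‖r • c‖ := by rw [hrc]
      _ = r * ‖c‖ := by rw [norm_smul, Real.norm_eq_abs, abs_of_pos hr]
      _ ≤ r * R := by apply mul_le_mul_of_nonneg_left this (le_of_lt hr)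
  have hgdef : gauge C x = sInf T := gauge_def
  have htpos : 0 < gauge C x := by
    rw [hgdef]
    have : ‖x‖ / R ≤ sInf T := le_csInf hTne hTlb
    have hxpos : 0 < ‖x‖ := norm_pos_iff.mpr hx0
    calc (0:ℝ) < ‖x‖ / R := by positivity
      _ ≤ sInf T := this
  set t := gauge C x with ht
  refine ⟨htpos, ?_⟩
  rw [Set.mem_smul_set_iff_inv_smul_mem₀ (ne_of_gt htpos)]
  -- for every s > t, s⁻¹ • x ∈ C
  have hmem : ∀ s : ℝ, t < s → s⁻¹ • x ∈ C := by
    intro s hs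
    obtain ⟨r, hrT, hrs⟩ := exists_lt_of_csInf_lt hTne (by rw [← hgdef]; exact hs)
    have hspos : 0 < s := lt_trans htpos hs
    obtain ⟨hr0, c, hc, hrc⟩ := hrT
    change r • c = x at hrc
    have hr0' : (0:ℝ) < r := hr0
    have : s⁻¹ • x = (r / s) • c := by
      rw [← hrc, smul_smul]
      congr 1
      field_simp
    rw [this]
    have h01 : 0 ≤ r / s := le_of_lt (div_pos hr0 hspos)
    have h1 : r / s ≤ 1 := by rw [div_le_one hspos]; exact le_of_lt hrs
    have := hconv hc h0 h01 (show (0:ℝ) ≤ 1 - r/s by linarith)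
      (by ring : r/s + (1 - r/s) = 1)
    simpa using this
  have hseq : Filter.Tendsto (fun k : ℕ => (t + 1 / (k + 1 : ℝ))⁻¹ • x) atTop (𝓝 (t⁻¹ • x)) := by
    have h1 : Filter.Tendsto (fun k : ℕ => t + 1 / (k + 1 : ℝ)) atTop (𝓝 t) := by
      have : Filter.Tendsto (fun k : ℕ => 1 / ((k : ℝ) + 1)) atTop (𝓝 0) :=
        tendsto_one_div_add_atTop_nhds_zero_nat
      have h2 : Filter.Tendsto (fun _ : ℕ => t) atTop (𝓝 t) := tendsto_const_nhds
      simpa using h2.add this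
    exact ((h1.inv₀ (ne_of_gt htpos)).smul_const x)
  refine hCc.isClosed.mem_of_tendsto hseq (Filter.Eventually.of_forall fun k => ?_)
  exact hmem _ (lt_add_of_pos_right _ (by positivity))

end Aux

open MeasureTheory
open scoped Pointwise

set_option maxHeartbeats 1000000 in
theorem conical_sections {n i : ℕ} (K : Set (EuclideanSpace ℝ (Fin n)))
    (hconv : Convex ℝ K) (hcomp : IsCompact K) (hint : (interior K).Nonempty)
    (H : Submodule ℝ (EuclideanSpace ℝ (Fin n))) (hH : Module.finrank ℝ H = i)
    (PHK : Set (EuclideanSpace ℝ (Fin n)))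
    (hPHK : PHK = (fun x => (H.orthogonalProjectionOnto x : EuclideanSpace ℝ (Fin n))) '' K)
    (f : EuclideanSpace ℝ (Fin n) → ℝ)
    (hf : f = fun y =>
      (volume {h : Hᗮ | y + (h : EuclideanSpace ℝ (Fin n)) ∈ K}).toReal ^
        (((n - i : ℕ) : ℝ)⁻¹))
    (y₀ : EuclideanSpace ℝ (Fin n)) (hy₀ : y₀ ∈ PHK)
    (hhyp : {p : EuclideanSpace ℝ (Fin n) × ℝ | p.1 ∈ PHK ∧ 0 ≤ p.2 ∧ p.2 ≤ f p.1} =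
      convexHull ℝ ((PHK ×ˢ ({0} : Set ℝ)) ∪ {(y₀, sSup (f '' PHK))})) :
    ∀ y ∈ PHK, ∃ z : EuclideanSpace ℝ (Fin n),
      K ∩ ((fun h : EuclideanSpace ℝ (Fin n) => y + h) '' (Hᗮ : Set (EuclideanSpace ℝ (Fin n)))) =
        (fun v => z + (1 - gauge ((fun x => x - y₀) '' PHK) (y - y₀)) • v) ''
          (K ∩ ((fun h : EuclideanSpace ℝ (Fin n) => y₀ + h) ''
            (Hᗮ : Set (EuclideanSpace ℝ (Fin n))))) := by
  classical
  intro y hy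
  have hEfin : Module.finrank ℝ (EuclideanSpace ℝ (Fin n)) = n := finrank_euclideanSpace_fin
  have hin : i ≤ n := by
    have h1 := H.finrank_le
    rw [hH, hEfin] at h1; exact h1
  have hd : Module.finrank ℝ ↥Hᗮ = n - i := by
    have h2 := Submodule.finrank_add_finrank_orthogonal (𝕜 := ℝ) H
    rw [hH, hEfin] at h2; omega
  set S : EuclideanSpace ℝ (Fin n) → Set ↥Hᗮ :=
    fun u => {h : ↥Hᗮ | u + (h : EuclideanSpace ℝ (Fin n)) ∈ K} with hSdef
  have hsec : ∀ u : EuclideanSpace ℝ (Fin n),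
      K ∩ ((fun h : EuclideanSpace ℝ (Fin n) => u + h) ''
        (Hᗮ : Set (EuclideanSpace ℝ (Fin n)))) =
        (fun h : ↥Hᗮ => u + (h : EuclideanSpace ℝ (Fin n))) '' S u := by
    intro u; ext x
    constructor
    · rintro ⟨hxK, h, hh, rfl⟩
      exact ⟨⟨h, hh⟩, hxK, rfl⟩
    · rintro ⟨h, hh, rfl⟩
      exact ⟨hh, ↑h, h.2, rfl⟩
  set C : Set (EuclideanSpace ℝ (Fin n)) := (fun x => x - y₀) '' PHK with hCdef
  have hmemC : ∀ u ∈ PHK, u - y₀ ∈ C := fun u hu => ⟨u, hu, rfl⟩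
  have hC0 : (0 : EuclideanSpace ℝ (Fin n)) ∈ C := by
    have := hmemC y₀ hy₀; rwa [sub_self] at this
  -- the degenerate case `i = n`
  by_cases hd0 : n - i = 0
  · have hbot : Hᗮ = ⊥ := by
      apply Submodule.finrank_eq_zero.mp
      rw [hd, hd0]
    have htop : H = ⊤ := Submodule.orthogonal_eq_bot_iff.mp hbot
    have hPK : PHK = K := by
      rw [hPHK]
      have himg : (fun x : EuclideanSpace ℝ (Fin n) =>
          ((H.orthogonalProjectionOnto x : H) : EuclideanSpace ℝ (Fin n))) = id := by
        funext x
        exact H.starProjection_eq_self_iff.mpr (by rw [htop]; trivial)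
      rw [himg, Set.image_id]
    have hyK : y ∈ K := hPK ▸ hy
    have hy₀K : y₀ ∈ K := hPK ▸ hy₀
    have hsingleton : ((Hᗮ : Set (EuclideanSpace ℝ (Fin n)))) = {0} := by
      rw [hbot]; rfl
    refine ⟨y - (1 - gauge C (y - y₀)) • y₀, ?_⟩
    rw [hsingleton]
    simp only [Set.image_singleton, add_zero]
    rw [Set.inter_eq_self_of_subset_right (Set.singleton_subset_iff.mpr hyK),
      Set.inter_eq_self_of_subset_right (Set.singleton_subset_iff.mpr hy₀K),
      Set.image_singleton, sub_add_cancel]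
  -- main case
  have hd1 : 0 < n - i := Nat.pos_of_ne_zero hd0
  -- basic facts
  have hπcont : Continuous
      (fun x : EuclideanSpace ℝ (Fin n) => ((H.orthogonalProjectionOnto x : H) :
        EuclideanSpace ℝ (Fin n))) :=
    continuous_subtype_val.comp (H.orthogonalProjectionOnto).continuous
  have hPHKcomp : IsCompact PHK := hPHK ▸ hcomp.image hπcont
  have hPHKconv : Convex ℝ PHK := by
    rw [hPHK]
    exact hconv.linear_image (H.subtype ∘ₗ (H.orthogonalProjectionOnto).toLinearMap)
  have hPHKH : PHK ⊆ (H : Set (EuclideanSpace ℝ (Fin n))) := by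
    rw [hPHK]; rintro _ ⟨x, -, rfl⟩; exact (H.orthogonalProjectionOnto x).2
  have hCconv : Convex ℝ C := by
    have : C = (fun x => -y₀ + x) '' PHK := by
      rw [hCdef]; apply Set.image_congr'; intro x; rw [sub_eq_neg_add]
    rw [this]; exact hPHKconv.translate _
  have hCcomp : IsCompact C := hPHKcomp.image (continuous_id.sub continuous_const)
  have hSconv : ∀ u, Convex ℝ (S u) := by
    intro u h₁ h1m h₂ h2m a b ha hb hab
    show u + ((a • h₁ + b • h₂ : ↥Hᗮ) : EuclideanSpace ℝ (Fin n)) ∈ K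
    have hK := hconv h1m h2m ha hb hab
    have heq : a • (u + (h₁ : EuclideanSpace ℝ (Fin n))) + b • (u + (h₂ :
        EuclideanSpace ℝ (Fin n))) = u + ((a • h₁ + b • h₂ : ↥Hᗮ) :
        EuclideanSpace ℝ (Fin n)) := by
      have h1 : a • u + b • u = u := by rw [← add_smul, hab, one_smul]
      push_cast
      rw [smul_add, smul_add, add_add_add_comm, h1]
    rwa [heq] at hK
  have hSclosed : ∀ u, IsClosed (S u) := by
    intro u
    have : S u = (fun h : ↥Hᗮ => u + (h : EuclideanSpace ℝ (Fin n))) ⁻¹' K := rfl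
    rw [this]
    exact hcomp.isClosed.preimage (continuous_const.add continuous_subtype_val)
  obtain ⟨R, hRK⟩ := hcomp.isBounded.subset_closedBall 0
  have hSball : ∀ u ∈ PHK, S u ⊆ closedBall (0 : ↥Hᗮ) R := by
    intro u hu h hh
    have hyH : u ∈ H := hPHKH hu
    have hinner : inner ℝ u (h : EuclideanSpace ℝ (Fin n)) = (0:ℝ) :=
      Submodule.inner_right_of_mem_orthogonal hyH h.2
    have hsq := norm_add_sq_real u (h : EuclideanSpace ℝ (Fin n))
    rw [hinner] at hsq
    have hK := hRK hh
    rw [mem_closedBall, dist_zero_right] at hK ⊢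
    rw [Submodule.coe_norm]
    nlinarith [norm_nonneg u, norm_nonneg (h : EuclideanSpace ℝ (Fin n)),
      norm_nonneg (u + (h : EuclideanSpace ℝ (Fin n)))]
  have hScomp : ∀ u ∈ PHK, IsCompact (S u) := fun u hu =>
    (isCompact_closedBall _ _).of_isClosed_subset (hSclosed u) (hSball u hu)
  have hSfin : ∀ u ∈ PHK, volume (S u) ≠ ⊤ := fun u hu => (hScomp u hu).measure_lt_top.ne
  have hSne : ∀ u ∈ PHK, (S u).Nonempty := by
    intro u hu
    rw [hPHK] at hu
    obtain ⟨x, hxK, rfl⟩ := hu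
    refine ⟨⟨x - _, H.sub_starProjection_mem_orthogonal x⟩, ?_⟩
    show (H.orthogonalProjectionOnto x : EuclideanSpace ℝ (Fin n)) +
      (x - (H.orthogonalProjectionOnto x : EuclideanSpace ℝ (Fin n))) ∈ K
    rwa [add_sub_cancel]
  have hfnn : ∀ u, 0 ≤ f u := by
    intro u; rw [hf]; exact Real.rpow_nonneg ENNReal.toReal_nonneg _
  have hcne : ((n - i : ℕ) : ℝ) ≠ 0 := Nat.cast_ne_zero.mpr hd0
  have hfd : ∀ u, (f u) ^ (((n - i : ℕ)) : ℝ) = (volume (S u)).toReal := by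
    intro u
    rw [hf]
    simp only
    rw [← Real.rpow_mul ENNReal.toReal_nonneg, inv_mul_cancel₀ hcne, Real.rpow_one]
  set M : ℝ := sSup (f '' PHK) with hMdef
  have hbdd : BddAbove (f '' PHK) := by
    refine ⟨(volume (closedBall (0:↥Hᗮ) R)).toReal ^ (((n - i : ℕ)) : ℝ)⁻¹, ?_⟩
    rintro _ ⟨u, hu, rfl⟩
    rw [hf]
    apply Real.rpow_le_rpow ENNReal.toReal_nonneg _ (by positivity)
    exact ENNReal.toReal_le_toReal (hSfin u hu) measure_closedBall_lt_top.ne |>.mpr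
      (measure_mono (hSball u hu))
  have hMfy₀ : f y₀ ≤ M := le_csSup hbdd ⟨y₀, hy₀, rfl⟩
  have hMnn : 0 ≤ M := (hfnn y₀).trans hMfy₀
  -- the hypograph is a join
  have hAconv : Convex ℝ (PHK ×ˢ ({0} : Set ℝ)) := hPHKconv.prod (convex_singleton 0)
  have hhyp' : {p : EuclideanSpace ℝ (Fin n) × ℝ | p.1 ∈ PHK ∧ 0 ≤ p.2 ∧ p.2 ≤ f p.1} =
      convexJoin ℝ {((y₀, M) : EuclideanSpace ℝ (Fin n) × ℝ)} (PHK ×ˢ ({0} : Set ℝ)) := by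
    rw [hhyp, Set.union_singleton, convexHull_insert (⟨(y₀, 0), Set.mem_prod.mpr ⟨hy₀, rfl⟩⟩ :
        (PHK ×ˢ ({0} : Set ℝ)).Nonempty),
      hAconv.convexHull_eq]
  have hfy₀M : f y₀ = M := by
    have hb := (Set.ext_iff.mp hhyp ((y₀, M))).mpr
      (subset_convexHull ℝ _ (Or.inr rfl))
    exact le_antisymm hMfy₀ hb.2.2
  -- M is positive
  have hMpos : 0 < M := by
    obtain ⟨xs, hxs⟩ := hint
    obtain ⟨rs, hrs, hballs⟩ := Metric.isOpen_iff.mp isOpen_interior xs hxs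
    have hxsK : xs ∈ K := interior_subset hxs
    set ys : EuclideanSpace ℝ (Fin n) := ↑(H.orthogonalProjectionOnto xs) with hys
    have hysPHK : ys ∈ PHK := by rw [hPHK]; exact ⟨xs, hxsK, rfl⟩
    set hs : ↥Hᗮ := ⟨xs - ys, H.sub_starProjection_mem_orthogonal xs⟩ with hhs
    have hballS : Metric.ball hs rs ⊆ S ys := by
      intro h hh
      show ys + (h : EuclideanSpace ℝ (Fin n)) ∈ K
      have hdist : dist (ys + (h : EuclideanSpace ℝ (Fin n))) xs < rs := by
        rw [dist_eq_norm]
        have h2 : ys + (h : EuclideanSpace ℝ (Fin n)) - xs =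
            ((h - hs : ↥Hᗮ) : EuclideanSpace ℝ (Fin n)) := by
          rw [AddSubgroupClass.coe_sub]
          show ys + (h : EuclideanSpace ℝ (Fin n)) - xs =
            (h : EuclideanSpace ℝ (Fin n)) - (xs - ys)
          abel
        rw [h2, ← Submodule.coe_norm]
        have := mem_ball.mp hh
        rwa [dist_eq_norm] at this
      exact interior_subset (hballs hdist)
    have hvolpos : volume (S ys) ≠ 0 := by
      have hb := measure_ball_pos (volume : Measure ↥Hᗮ) hs hrs
      intro h0
      exact (hb.trans_le (measure_mono hballS)).ne' h0
    have hfpos : 0 < f ys := by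
      rw [hf]
      exact Real.rpow_pos_of_pos (ENNReal.toReal_pos hvolpos (hSfin ys hysPHK)) _
    exact lt_of_lt_of_le hfpos (le_csSup hbdd ⟨ys, hysPHK, rfl⟩)
  -- the conical formula for f
  have hformula : ∀ u ∈ PHK, f u = M * (1 - gauge C (u - y₀)) := by
    intro u hu
    have hle1 : gauge C (u - y₀) ≤ 1 := gauge_le_one_of_mem (hmemC u hu)
    have hnn : 0 ≤ gauge C (u - y₀) := gauge_nonneg _
    set t := gauge C (u - y₀) with htdef
    have hupper : f u ≤ M * (1 - t) := by
      have hmem2 := (Set.ext_iff.mp hhyp' ((u, f u))).mp ⟨hu, hfnn u, le_refl _⟩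
      obtain ⟨b', hb', c', hc', hseg⟩ := mem_convexJoin.mp hmem2
      rw [Set.mem_singleton_iff] at hb'; subst hb'
      obtain ⟨hc1, hc2⟩ := Set.mem_prod.mp hc'
      rw [Set.mem_singleton_iff] at hc2
      obtain ⟨a, b, ha, hb, hab, hcomb⟩ := hseg
      have h1 := congrArg Prod.fst hcomb
      have h2 := congrArg Prod.snd hcomb
      simp only [Prod.fst_add, Prod.snd_add, Prod.smul_fst, Prod.smul_snd,
        smul_eq_mul] at h1 h2
      rw [hc2] at h2
      have hsub : u - y₀ = b • (c'.1 - y₀) := by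
        have ha' : a = 1 - b := by linarith
        rw [← h1, ha', smul_sub, sub_smul, one_smul]; abel
      have htb : t ≤ b := by
        rw [htdef, hsub, gauge_smul_of_nonneg hb, smul_eq_mul]
        calc b * gauge C (c'.1 - y₀) ≤ b * 1 :=
              mul_le_mul_of_nonneg_left (gauge_le_one_of_mem (hmemC _ hc1)) hb
          _ = b := mul_one b
      have hfua : f u = a * M := by rw [← h2]; ring
      rw [hfua]
      have hat : a ≤ 1 - t := by linarith
      calc a * M ≤ (1 - t) * M := mul_le_mul_of_nonneg_right hat hMnn
        _ = M * (1 - t) := mul_comm _ _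
    have hlower : M * (1 - t) ≤ f u := by
      rcases eq_or_lt_of_le hle1 with h1 | h1
      · rw [← h1]; simpa using hfnn u
      · have hstep : ∀ s : ℝ, t < s → s ≤ 1 → (1 - s) * M ≤ f u := by
          intro s hts hs1
          have hspos : 0 < s := lt_of_le_of_lt hnn hts
          have hTne : (1:ℝ) ∈ {r ∈ Set.Ioi (0:ℝ) | u - y₀ ∈ r • C} :=
            ⟨Set.mem_Ioi.mpr one_pos, by rw [one_smul]; exact hmemC u hu⟩
          have hsinf : sInf {r ∈ Set.Ioi (0:ℝ) | u - y₀ ∈ r • C} < s := by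
            rw [← gauge_def]; exact hts
          obtain ⟨r, hrT, hrs⟩ := exists_lt_of_csInf_lt ⟨1, hTne⟩ hsinf
          obtain ⟨hr0, c, hcC, hrc⟩ := hrT
          change r • c = u - y₀ at hrc
          have hr0' : (0:ℝ) < r := hr0
          have hrsC : (r/s) • c ∈ C := by
            have h01 : 0 ≤ r / s := le_of_lt (div_pos hr0' hspos)
            have hle : r / s ≤ 1 := by rw [div_le_one hspos]; exact le_of_lt hrs
            have := hCconv hcC hC0 h01 (show (0:ℝ) ≤ 1 - r/s by linarith)
              (by ring : r/s + (1 - r/s) = 1)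
            simpa using this
          obtain ⟨p, hp, hpc⟩ := hrsC
          change p - y₀ = (r/s) • c at hpc
          have h3 : s • (p - y₀) = u - y₀ := by
            rw [hpc, smul_smul, mul_div_cancel₀ _ (ne_of_gt hspos), hrc]
          have h5 : s • (p - y₀) + y₀ = u := by rw [h3]; abel
          have h4 : (1 - s) • y₀ + s • p = u := by
            rw [← h5, smul_sub, sub_smul, one_smul]; abel
          have hq : ((u, (1-s)*M) : EuclideanSpace ℝ (Fin n) × ℝ) ∈
              convexJoin ℝ {((y₀, M) : EuclideanSpace ℝ (Fin n) × ℝ)}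
                (PHK ×ˢ ({0} : Set ℝ)) := by
            rw [mem_convexJoin]
            refine ⟨(y₀, M), rfl, (p, 0), Set.mem_prod.mpr ⟨hp, rfl⟩,
              (1-s), s, by linarith, hspos.le, by ring, ?_⟩
            rw [Prod.smul_mk, Prod.smul_mk, Prod.mk_add_mk, smul_eq_mul, smul_eq_mul,
              h4]
            norm_num
          have hq2 := (Set.ext_iff.mp hhyp' ((u, (1-s)*M))).mpr hq
          exact hq2.2.2
        have htends : Filter.Tendsto (fun s : ℝ => (1 - s) * M)
            (nhdsWithin t (Set.Ioi t)) (nhds ((1 - t) * M)) := by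
          apply Filter.Tendsto.mono_left _ nhdsWithin_le_nhds
          exact ((continuous_const.sub continuous_id).mul continuous_const).tendsto t
        have hev : ∀ᶠ s in nhdsWithin t (Set.Ioi t), (1 - s) * M ≤ f u := by
          filter_upwards [Ioo_mem_nhdsGT_of_mem (Set.mem_Ico.mpr ⟨le_refl t, h1⟩)]
            with s hsm
          exact hstep s hsm.1 (le_of_lt hsm.2)
        have hfin := le_of_tendsto htends hev
        linarith
    linarith
  -- volume of the central section
  have hvolSy₀ : (volume (S y₀)).toReal = M ^ (((n - i : ℕ)) : ℝ) := by
    rw [← hfd y₀, hfy₀M]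
  have hSy₀pos : volume (S y₀) ≠ 0 := by
    intro h0
    have h1 := hvolSy₀
    rw [h0, ENNReal.toReal_zero] at h1
    have h2 : (0:ℝ) < M ^ (((n - i : ℕ)) : ℝ) := Real.rpow_pos_of_pos hMpos _
    rw [← h1] at h2
    exact lt_irrefl _ h2
  -- the key homothety statement
  have key : ∀ u ∈ PHK, gauge C (u - y₀) < 1 → ∃ W : ↥Hᗮ,
      S u = (fun h : ↥Hᗮ => W + (1 - gauge C (u - y₀)) • h) '' S y₀ := by
    intro u hu hlt
    by_cases huy : u = y₀
    · refine ⟨0, ?_⟩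
      subst huy
      simp [sub_self, gauge_zero]
    · have hne0 : u - y₀ ≠ 0 := sub_ne_zero.mpr huy
      set t := gauge C (u - y₀) with htdef
      have htnn : 0 ≤ t := gauge_nonneg _
      obtain ⟨htpos, hmemt⟩ := aux_gauge_attained hCcomp hC0 hCconv (hmemC u hu) hne0
      obtain ⟨cc, hccC, hcc⟩ := hmemt
      change t • cc = u - y₀ at hcc
      obtain ⟨p, hpPHK, hpc⟩ := hccC
      change p - y₀ = cc at hpc
      rw [← hpc] at hcc
      have hueq : u = y₀ + t • (p - y₀) := by rw [hcc]; abel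
      have hpPHK' := hpPHK
      rw [hPHK] at hpPHK'
      obtain ⟨xp, hxpK, hxp⟩ := hpPHK'
      have hqmem : xp - p ∈ Hᗮ := by
        rw [← hxp]; exact H.sub_starProjection_mem_orthogonal xp
      refine ⟨t • (⟨xp - p, hqmem⟩ : ↥Hᗮ), ?_⟩
      set W : ↥Hᗮ := t • (⟨xp - p, hqmem⟩ : ↥Hᗮ) with hWdef
      have hWcoe : ((W : ↥Hᗮ) : EuclideanSpace ℝ (Fin n)) = t • (xp - p) := by
        rw [hWdef, Submodule.coe_smul]
      have hincl : (fun h : ↥Hᗮ => W + (1 - t) • h) '' S y₀ ⊆ S u := by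
        rintro _ ⟨h, hh, rfl⟩
        show u + ((W + (1 - t) • h : ↥Hᗮ) : EuclideanSpace ℝ (Fin n)) ∈ K
        have hh' : y₀ + (h : EuclideanSpace ℝ (Fin n)) ∈ K := hh
        have hKmem := hconv hh' hxpK (show (0:ℝ) ≤ 1 - t by linarith) htnn
          (by ring : (1 - t) + t = 1)
        have heqq : (1 - t) • (y₀ + (h : EuclideanSpace ℝ (Fin n))) + t • xp =
            u + ((W + (1 - t) • h : ↥Hᗮ) : EuclideanSpace ℝ (Fin n)) := by
          push_cast
          rw [hWcoe, hueq]
          rw [smul_add, sub_smul, one_smul, smul_sub, smul_sub]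
          abel
        rwa [heqq] at hKmem
      have himg : (fun h : ↥Hᗮ => W + (1 - t) • h) '' S y₀ =
          (fun z : ↥Hᗮ => W + z) '' ((1 - t) • S y₀) := by
        rw [← Set.image_smul, Set.image_image]
      have hμA : volume ((fun h : ↥Hᗮ => W + (1 - t) • h) '' S y₀)
          = ENNReal.ofReal ((1 - t) ^ (n - i)) * volume (S y₀) := by
        rw [himg, Set.image_add_left, measure_preimage_add, Measure.addHaar_smul, hd]
        congr 2
        rw [abs_of_nonneg (pow_nonneg (by linarith) _)]
      have hμSu : volume (S u) = ENNReal.ofReal ((1 - t) ^ (n - i)) * volume (S y₀) := by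
        have hrl : (volume (S u)).toReal =
            ((1 - t) ^ (n - i)) * (volume (S y₀)).toReal := by
          rw [← hfd u, hformula u hu, hvolSy₀]
          rw [Real.mul_rpow hMnn (by linarith), ← Real.rpow_natCast (1 - t) (n - i)]
          ring
        have h2 : ENNReal.ofReal ((1 - t) ^ (n - i)) * volume (S y₀) ≠ ⊤ :=
          ENNReal.mul_ne_top ENNReal.ofReal_ne_top (hSfin y₀ hy₀)
        rw [← ENNReal.toReal_eq_toReal_iff' (hSfin u hu) h2]
        rw [hrl, ENNReal.toReal_mul, ENNReal.toReal_ofReal (pow_nonneg (by linarith) _)]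
      have hμApos : volume ((fun h : ↥Hᗮ => W + (1 - t) • h) '' S y₀) ≠ 0 := by
        rw [hμA]
        apply mul_ne_zero _ hSy₀pos
        simp only [ne_eq, ENNReal.ofReal_eq_zero, not_le]
        exact pow_pos (by linarith) _
      have hAconv2 : Convex ℝ ((fun h : ↥Hᗮ => W + (1 - t) • h) '' S y₀) := by
        rw [himg]
        exact ((hSconv y₀).smul _).translate _
      have hAclosed : IsClosed ((fun h : ↥Hᗮ => W + (1 - t) • h) '' S y₀) :=
        ((hScomp y₀ hy₀).image
          (continuous_const.add (continuous_const_smul (1 - t)))).isClosed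
      have hfinal := aux_eq_of_subset_of_measure_le (volume : Measure ↥Hᗮ) hincl
        hAclosed hAconv2 (hSconv u) hμApos (hSfin u hu)
        (le_of_eq (by rw [hμSu, hμA]))
      exact hfinal
  -- conclusion
  rw [hsec y, hsec y₀]
  rcases lt_or_eq_of_le (gauge_le_one_of_mem (hmemC y hy)) with hlt | heq1
  · obtain ⟨W, hW⟩ := key y hy hlt
    refine ⟨y + (W : EuclideanSpace ℝ (Fin n)) - (1 - gauge C (y - y₀)) • y₀, ?_⟩
    rw [hW, ← Set.image_comp, ← Set.image_comp]
    apply Set.image_congr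
    intro h _
    show y + ((W + (1 - gauge C (y - y₀)) • h : ↥Hᗮ) : EuclideanSpace ℝ (Fin n)) =
      (y + (W : EuclideanSpace ℝ (Fin n)) - (1 - gauge C (y - y₀)) • y₀) +
        (1 - gauge C (y - y₀)) • (y₀ + (h : EuclideanSpace ℝ (Fin n)))
    push_cast
    rw [smul_add]
    abel
  · -- gauge equals 1 : the section is a single point
    obtain ⟨h₀, hh₀⟩ := hSne y hy
    obtain ⟨k₀, hk₀⟩ := hSne y₀ hy₀
    have hR0 : 0 ≤ R := by
      have hb := hSball y₀ hy₀ hk₀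
      rw [mem_closedBall, dist_zero_right] at hb
      exact le_trans (norm_nonneg _) hb
    have hsingle : ∀ h₁ ∈ S y, h₁ = h₀ := by
      intro h₁ hh₁
      have hkey2 : ∀ ε : ℝ, 0 < ε → ‖h₁ - h₀‖ ≤ ε := by
        intro ε hε
        set A := 2 * R + 1 with hAdef
        have hApos : 0 < A := by rw [hAdef]; linarith
        have hAε : 0 < A + ε := by linarith
        set s := A / (A + ε) with hsdef
        have hs0 : 0 < s := by positivity
        have hs1 : s < 1 := by rw [hsdef, div_lt_one hAε]; linarith
        set us := y₀ + s • (y - y₀) with husdef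
        have husPHK : us ∈ PHK := by
          have hmm := hPHKconv hy₀ hy (show (0:ℝ) ≤ 1 - s by linarith) hs0.le
            (by ring : (1 - s) + s = 1)
          have heqq : (1 - s) • y₀ + s • y = us := by
            rw [husdef, sub_smul, one_smul, smul_sub]; abel
          rwa [heqq] at hmm
        have hgs : gauge C (us - y₀) = s := by
          rw [husdef]
          have hsimp : y₀ + s • (y - y₀) - y₀ = s • (y - y₀) := by abel
          rw [hsimp, gauge_smul_of_nonneg hs0.le, smul_eq_mul, heq1, mul_one]
        obtain ⟨Ws, hWs⟩ := key us husPHK (by rw [hgs]; exact hs1)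
        have hmm : ∀ hh : ↥Hᗮ, hh ∈ S y → s • hh + (1 - s) • k₀ ∈ S us := by
          intro hh hmem
          show us + ((s • hh + (1 - s) • k₀ : ↥Hᗮ) : EuclideanSpace ℝ (Fin n)) ∈ K
          have hmem' : y + (hh : EuclideanSpace ℝ (Fin n)) ∈ K := hmem
          have hk₀' : y₀ + (k₀ : EuclideanSpace ℝ (Fin n)) ∈ K := hk₀
          have hKm := hconv hmem' hk₀' hs0.le (show (0:ℝ) ≤ 1 - s by linarith)
            (by ring : s + (1 - s) = 1)
          have heqq : s • (y + (hh : EuclideanSpace ℝ (Fin n))) +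
              (1 - s) • (y₀ + (k₀ : EuclideanSpace ℝ (Fin n))) =
              us + ((s • hh + (1 - s) • k₀ : ↥Hᗮ) : EuclideanSpace ℝ (Fin n)) := by
            push_cast
            rw [husdef, smul_add, smul_add, smul_sub, sub_smul, one_smul]
            abel
          rwa [heqq] at hKm
        have hm1 := hmm h₁ hh₁
        have hm0 := hmm h₀ hh₀
        rw [hWs] at hm1 hm0
        obtain ⟨k₁, hk₁, hE1⟩ := hm1
        obtain ⟨k₂, hk₂, hE2⟩ := hm0
        simp only at hE1 hE2
        rw [hgs] at hE1 hE2
        have hsub : s • h₁ - s • h₀ = (1 - s) • k₁ - (1 - s) • k₂ := by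
          have h3 : Ws + (1-s) • k₁ - (Ws + (1-s) • k₂) =
              s • h₁ + (1-s) • k₀ - (s • h₀ + (1-s) • k₀) := by rw [hE1, hE2]
          calc s • h₁ - s • h₀
              = s • h₁ + (1-s) • k₀ - (s • h₀ + (1-s) • k₀) := by abel
            _ = Ws + (1-s) • k₁ - (Ws + (1-s) • k₂) := h3.symm
            _ = (1 - s) • k₁ - (1 - s) • k₂ := by abel
        have hnorm : s * ‖h₁ - h₀‖ ≤ (1 - s) * (2 * R) := by
          have h1n := congrArg norm hsub
          rw [← smul_sub, ← smul_sub, norm_smul, norm_smul, Real.norm_eq_abs,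
            Real.norm_eq_abs, abs_of_pos hs0,
            abs_of_nonneg (show (0:ℝ) ≤ 1 - s by linarith)] at h1n
          have hk1R : ‖k₁‖ ≤ R := by
            have hb := hSball y₀ hy₀ hk₁
            rwa [mem_closedBall, dist_zero_right] at hb
          have hk2R : ‖k₂‖ ≤ R := by
            have hb := hSball y₀ hy₀ hk₂
            rwa [mem_closedBall, dist_zero_right] at hb
          have hkk : ‖k₁ - k₂‖ ≤ 2 * R := by
            calc ‖k₁ - k₂‖ ≤ ‖k₁‖ + ‖k₂‖ := norm_sub_le _ _
              _ ≤ 2 * R := by linarith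
          rw [h1n]
          exact mul_le_mul_of_nonneg_left hkk (by linarith)
        have h7 : (1 - s) * (2 * R) ≤ s * ε := by
          rw [hsdef]
          have e1 : 1 - A / (A + ε) = ε / (A + ε) := by field_simp; ring
          rw [e1]
          rw [div_mul_eq_mul_div, div_mul_eq_mul_div, div_le_div_iff₀ hAε hAε]
          have : ε * (2*R) ≤ ε * A := by
            apply mul_le_mul_of_nonneg_left _ hε.le
            rw [hAdef]; linarith
          nlinarith
        have h8 : s * ‖h₁ - h₀‖ ≤ s * ε := le_trans hnorm h7
        have := le_of_mul_le_mul_left (by linarith [h8] : s * ‖h₁ - h₀‖ ≤ s * ε) hs0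
        linarith [this]
      by_contra hnee
      have hpos : 0 < ‖h₁ - h₀‖ := by
        rw [norm_pos_iff, sub_ne_zero]; exact hnee
      have := hkey2 (‖h₁ - h₀‖ / 2) (by positivity)
      linarith
    have hSy : S y = {h₀} := Set.eq_singleton_iff_unique_mem.mpr ⟨hh₀, hsingle⟩
    refine ⟨y + (h₀ : EuclideanSpace ℝ (Fin n)), ?_⟩
    rw [hSy, Set.image_singleton, ← Set.image_comp]
    have hconst : ((fun v => (y + (h₀ : EuclideanSpace ℝ (Fin n))) +
        (1 - gauge C (y - y₀)) • v) ∘ fun h : ↥Hᗮ =>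
          y₀ + (h : EuclideanSpace ℝ (Fin n))) =
        fun _ => y + (h₀ : EuclideanSpace ℝ (Fin n)) := by
      funext h
      simp [Function.comp, ← heq1]
    rw [hconst]
    exact ((hSne y₀ hy₀).image_const _).symm
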